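/- The positive continuous bilinear operator A : ℝ × ℓ_2 → ℓ_∞, A(λ, x) = λx (where ℓ_2 is included in ℓ_∞), is almost Dunford–Pettis but not separately almost Dunford–Pettis. More precisely: (i) ‖A(λ_n, x_n)‖_∞ → 0 whenever (λ_n) is a disjoint weakly null sequence in ℝ and (x_n) is a disjoint weakly null sequence in ℓ_2; (ii) the linear operator x ↦ A(1, x) from ℓ_2 to ℓ_∞ is not almost Dunford–Pettis, since the canonical unit vectors (e_n) form a disjoint weakly null sequence in ℓ_2 with ‖A(1, e_n)‖_∞ = 1 for all n. -/

import Mathlib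

open Filter Topology
open scoped ENNReal

noncomputable section

instance : Fact ((1 : ℝ≥0∞) ≤ 2) := ⟨by norm_num⟩
instance : Fact ((1 : ℝ≥0∞) ≤ ∞) := ⟨le_top⟩

/-- A sequence is weakly null if `f (x n) → 0` for every continuous linear functional `f`. -/
def WeaklyNullLp {p : ℝ≥0∞} [Fact (1 ≤ p)] (x : ℕ → lp (fun _ : ℕ => ℝ) p) : Prop :=
  ∀ f : lp (fun _ : ℕ => ℝ) p →L[ℝ] ℝ, Tendsto (fun n => f (x n)) atTop (𝓝 0)

/-- A sequence in `ℓ_p` is disjoint (for the coordinatewise order) if for `n ≠ k` the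
coordinatewise infimum of `|x n|` and `|x k|` vanishes. -/
def DisjointSeqLp {p : ℝ≥0∞} (x : ℕ → lp (fun _ : ℕ => ℝ) p) : Prop :=
  ∀ n k, n ≠ k → ∀ i, min |x n i| |x k i| = 0

/-- The `n`-th canonical unit vector of `ℓ_p`. -/
def unitVec (p : ℝ≥0∞) (n : ℕ) : lp (fun _ : ℕ => ℝ) p := lp.single p n 1

/-- The inclusion of `ℓ_2` into `ℓ_∞`. -/
def incl2inf (x : lp (fun _ : ℕ => ℝ) 2) : lp (fun _ : ℕ => ℝ) ∞ :=
  ⟨⇑x, memℓp_infty ⟨‖x‖, by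
    rintro r ⟨i, rfl⟩
    exact lp.norm_apply_le_norm (by norm_num) x i⟩⟩

lemma incl2inf_apply (x : lp (fun _ : ℕ => ℝ) 2) (i : ℕ) : incl2inf x i = x i := rfl

lemma unitVec_apply (p : ℝ≥0∞) (n i : ℕ) :
    unitVec p n i = if i = n then (1 : ℝ) else 0 := by
  unfold unitVec
  rw [lp.single_apply]
  split <;> simp_all

lemma norm_incl2inf_unitVec (n : ℕ) : ‖incl2inf (unitVec 2 n)‖ = 1 := by
  apply le_antisymm
  · apply lp.norm_le_of_forall_le zero_le_one
    intro i
    rw [incl2inf_apply, unitVec_apply]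
    split <;> simp
  · have := lp.norm_apply_le_norm (p := ∞) (by simp) (incl2inf (unitVec 2 n)) n
    rw [incl2inf_apply, unitVec_apply] at this
    simp only [if_true, norm_one] at this
    exact this

lemma unitVec_weaklyNull : WeaklyNullLp (unitVec 2) := by
  intro f
  obtain ⟨y, hy⟩ := (InnerProductSpace.toDual ℝ (lp (fun _ : ℕ => ℝ) 2)).surjective f
  have hfy : ∀ n, f (unitVec 2 n) = y n := by
    intro n
    rw [← hy]
    have : (InnerProductSpace.toDual ℝ (lp (fun _ : ℕ => ℝ) 2)) y (unitVec 2 n)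
        = inner ℝ y (unitVec 2 n) := rfl
    rw [this, lp.inner_eq_tsum]
    rw [tsum_eq_single n]
    · simp [RCLike.inner_apply, unitVec_apply]
    · intro i hi
      simp [RCLike.inner_apply, unitVec_apply, hi]
  simp only [hfy]
  -- y ∈ ℓ₂, so y n → 0
  have hsum : Summable fun i => ‖y i‖ ^ (2 : ℝ≥0∞).toReal := by
    have := lp.memℓp y
    exact this.summable (by norm_num)
  have h2 : Tendsto (fun n => ‖y n‖ ^ (2 : ℝ≥0∞).toReal) atTop (𝓝 0) :=
    hsum.tendsto_atTop_zero
  have h3 : Tendsto (fun n => ‖y n‖) atTop (𝓝 0) := by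
    have hsqrt := (Real.continuous_sqrt.tendsto 0).comp h2
    simp only [Real.sqrt_zero] at hsqrt
    refine hsqrt.congr fun n => ?_
    simp only [Function.comp_apply]
    rw [show ((2:ℝ≥0∞)).toReal = (2:ℝ) by norm_num, Real.rpow_two,
      Real.sqrt_sq (norm_nonneg _)]
  simpa [tendsto_zero_iff_norm_tendsto_zero] using h3

/-- The positive continuous bilinear operator `A : ℝ × ℓ_2 → ℓ_∞`, `A (λ, x) = λ x`, is
almost Dunford-Pettis but not separately almost Dunford-Pettis:  the operator
`x ↦ A (1, x)` fails to be almost Dunford-Pettis, as witnessed by the canonical unit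
vectors of `ℓ_2`. -/
theorem smul_inclusion_almostDP_not_separately :
    -- (i) `A` is almost Dunford-Pettis
    (∀ (l : ℕ → ℝ) (x : ℕ → lp (fun _ : ℕ => ℝ) 2),
      (∀ n k, n ≠ k → min |l n| |l k| = 0) →
      (∀ f : ℝ →L[ℝ] ℝ, Tendsto (fun n => f (l n)) atTop (𝓝 0)) →
      DisjointSeqLp x → WeaklyNullLp x →
      Tendsto (fun n => ‖l n • incl2inf (x n)‖) atTop (𝓝 0)) ∧
    -- (ii) `x ↦ A (1, x)` is not almost Dunford-Pettis:
    -- the unit vectors are disjoint and weakly null in `ℓ_2` ...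
    DisjointSeqLp (unitVec 2) ∧ WeaklyNullLp (unitVec 2) ∧
    -- ... but `‖A (1, e n)‖ = 1` for every `n`
    (∀ n, ‖(1 : ℝ) • incl2inf (unitVec 2 n)‖ = 1) ∧
    ¬ (∀ x : ℕ → lp (fun _ : ℕ => ℝ) 2, DisjointSeqLp x → WeaklyNullLp x →
        Tendsto (fun n => ‖(1 : ℝ) • incl2inf (x n)‖) atTop (𝓝 0)) := by
  refine ⟨?_, ?_, unitVec_weaklyNull, ?_, ?_⟩
  · -- (i): by disjointness in ℝ, at most one `l n` is nonzero.
    intro l x hl _ _ _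
    by_cases h : ∀ n, l n = 0
    · refine tendsto_const_nhds.congr fun n => ?_
      rw [h n, zero_smul, norm_zero]
    · push_neg at h
      obtain ⟨n₀, hn₀⟩ := h
      have hz : ∀ n, n ≠ n₀ → l n = 0 := by
        intro n hn
        have := hl n n₀ hn
        rcases min_eq_iff.mp this with h' | h'
        · exact abs_eq_zero.mp h'.1
        · exact absurd (abs_eq_zero.mp h'.1) hn₀
      refine Tendsto.congr' ?_ tendsto_const_nhds
      filter_upwards [eventually_gt_atTop n₀] with n hn
      rw [hz n hn.ne', zero_smul, norm_zero]
  · -- unit vectors are disjoint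
    intro n k hnk i
    rw [unitVec_apply, unitVec_apply]
    rcases eq_or_ne i n with rfl | h
    · simp [hnk]
    · simp [h]
  · intro n
    rw [one_smul]
    exact norm_incl2inf_unitVec n
  · intro H
    have := H (unitVec 2) (by
      intro n k hnk i
      rw [unitVec_apply, unitVec_apply]
      rcases eq_or_ne i n with rfl | h
      · simp [hnk]
      · simp [h]) unitVec_weaklyNull
    simp only [one_smul, norm_incl2inf_unitVec] at this
    exact absurd (tendsto_nhds_unique this tendsto_const_nhds).symm one_ne_zero

end
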